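/- For every nonnegative integer k and every integer r ≥ 1 there exist polynomials P_{k,0}(q), …, P_{k,rk}(q) with integer coefficients such that, in ℚ(q), for all nonnegative integers n: ([n,k])^r = Σ_{j=0}^{r·k} P_{k,j}(q)·[n,j]. -/

import Mathlib

/-- The $q$-factorial `(q)_n = (1-q)(1-q²)⋯(1-qⁿ)` in `ℚ(q) = RatFunc ℚ`. -/
noncomputable def qfac (n : ℕ) : RatFunc ℚ :=
  ∏ m ∈ Finset.range n, (1 - (RatFunc.X : RatFunc ℚ) ^ (m + 1))

/-- The Gaussian binomial coefficient `[n, k]` in `ℚ(q)`. -/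
noncomputable def qbinom (n k : ℕ) : RatFunc ℚ :=
  if k ≤ n then qfac n / (qfac k * qfac (n - k)) else 0

/-- The $q$-multinomial coefficient `Mq(j; i, k)` in `ℚ(q)`: it equals
`(q)_j/((q)_{j-i}(q)_{j-k}(q)_{i+k-j})` when `max i k ≤ j ≤ i + k`, and `0`
otherwise. -/
noncomputable def qmulti (j i k : ℕ) : RatFunc ℚ :=
  if i ≤ j ∧ k ≤ j ∧ j ≤ i + k then
    qfac j / (qfac (j - i) * qfac (j - k) * qfac (i + k - j))
  else 0


lemma one_sub_X_pow_ne (m : ℕ) : (1 - (RatFunc.X : RatFunc ℚ) ^ (m + 1)) ≠ 0 := by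
  rw [sub_ne_zero]
  intro h
  have h2 : (algebraMap (Polynomial ℚ) (RatFunc ℚ)) (Polynomial.X ^ (m+1)) =
      algebraMap (Polynomial ℚ) (RatFunc ℚ) 1 := by simpa using h.symm
  have := RatFunc.algebraMap_injective ℚ h2
  have hd := congrArg Polynomial.natDegree this
  simp [Polynomial.natDegree_X_pow] at hd

lemma qfac_ne_zero (n : ℕ) : qfac n ≠ 0 :=
  Finset.prod_ne_zero_iff.2 fun m _ => one_sub_X_pow_ne m

lemma qfac_succ (n : ℕ) : qfac (n + 1) = qfac n * (1 - (RatFunc.X : RatFunc ℚ) ^ (n + 1)) :=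
  Finset.prod_range_succ _ _

lemma qbinom_of_le {n k : ℕ} (h : k ≤ n) : qbinom n k = qfac n / (qfac k * qfac (n - k)) :=
  if_pos h

lemma qbinom_of_lt {n k : ℕ} (h : n < k) : qbinom n k = 0 := if_neg (by omega)

lemma qbinom_zero (n : ℕ) : qbinom n 0 = 1 := by
  rw [qbinom_of_le (Nat.zero_le n)]
  simp [qfac, div_self (qfac_ne_zero n)]
  exact qfac_ne_zero n

lemma qbinom_self (n : ℕ) : qbinom n n = 1 := by
  rw [qbinom_of_le le_rfl]
  simp [Nat.sub_self]
  have : qfac 0 = 1 := by simp [qfac]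
  rw [this, mul_one]
  exact div_self (qfac_ne_zero n)

lemma qfac_zero : qfac 0 = 1 := by simp [qfac]

lemma pascal (n k : ℕ) : qbinom (n+1) (k+1) =
    (RatFunc.X : RatFunc ℚ) ^ (k+1) * qbinom n (k+1) + qbinom n k := by
  by_cases hk : k ≤ n
  · by_cases hk1 : k + 1 ≤ n
    · rw [qbinom_of_le (by omega), qbinom_of_le hk1, qbinom_of_le hk]
      have h1 : n + 1 - (k+1) = n - k := by omega
      have h2 : n - k = (n - (k+1)) + 1 := by omega
      rw [h1, qfac_succ n, qfac_succ k, h2, qfac_succ (n - (k+1))]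
      have e1 := qfac_ne_zero n
      have e2 := qfac_ne_zero k
      have e3 := qfac_ne_zero (n - (k+1))
      have e4 := one_sub_X_pow_ne k
      have e5 := one_sub_X_pow_ne (n - (k+1))
      have e6 : (n - (k+1)) + 1 = n - k := by omega
      have key : (1 : RatFunc ℚ) - RatFunc.X ^ (n+1) =
          RatFunc.X ^ (k+1) * (1 - RatFunc.X ^ (n - (k+1) + 1)) + (1 - RatFunc.X ^ (k+1)) := by
        have : (RatFunc.X : RatFunc ℚ) ^ (k+1) * RatFunc.X ^ (n - (k+1) + 1) = RatFunc.X ^ (n+1) := by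
          rw [← pow_add]; congr 1; omega
        rw [mul_sub, mul_one, this]; ring
      field_simp
      rw [key]
    · have hkn : k = n := by omega
      subst hkn
      rw [qbinom_self, qbinom_of_lt (by omega), qbinom_self]
      ring
  · rw [qbinom_of_lt (by omega), qbinom_of_lt (by omega), qbinom_of_lt (by omega)]
    ring

lemma pascal' (n j : ℕ) : qbinom (n+1) j =
    (RatFunc.X : RatFunc ℚ) ^ j * qbinom n j + (if j = 0 then 0 else qbinom n (j-1)) := by
  cases j with
  | zero => simp [qbinom_zero]
  | succ j => simp only [Nat.succ_ne_zero, if_neg, Nat.add_sub_cancel]; rw [pascal]; simp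

/-- Gaussian binomial polynomials over ℤ. -/
noncomputable def Gpoly : ℕ → ℕ → Polynomial ℤ
  | _, 0 => 1
  | 0, _ + 1 => 0
  | n + 1, k + 1 => Polynomial.X ^ (k+1) * Gpoly n (k+1) + Gpoly n k

lemma qbinom_eq_aeval (n k : ℕ) :
    qbinom n k = Polynomial.aeval (RatFunc.X : RatFunc ℚ) (Gpoly n k) := by
  induction n generalizing k with
  | zero =>
    cases k with
    | zero => simp [qbinom_zero, Gpoly]
    | succ k => simp [Gpoly]; exact qbinom_of_lt (Nat.succ_pos k)
  | succ n ih =>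
    cases k with
    | zero => simp [qbinom_zero, Gpoly]
    | succ k =>
      rw [pascal, Gpoly]
      simp [map_add, map_mul, map_pow, ih]

lemma vandermonde (m : ℕ) : ∀ p k : ℕ, qbinom (m + p) k =
    ∑ t ∈ Finset.range (k+1),
      (RatFunc.X : RatFunc ℚ) ^ (t * (p + t - k)) * qbinom m t * qbinom p (k - t) := by
  intro p
  induction p with
  | zero =>
    intro k
    rw [Finset.sum_eq_single k]
    · simp [qbinom_self]
    · intro t ht htk
      have ht' : t < k := by simp at ht; omega
      rw [qbinom_of_lt (show (0:ℕ) < k - t by omega)]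
      ring
    · intro h; simp at h
  | succ p ih =>
    intro k
    cases k with
    | zero => simp [qbinom_zero]
    | succ k =>
      have lhs : qbinom (m + (p+1)) (k+1) =
          RatFunc.X ^ (k+1) * qbinom (m+p) (k+1) + qbinom (m+p) k := by
        rw [show m + (p+1) = (m+p)+1 by omega, pascal]
      rw [lhs, ih (k+1), ih k]
      have rhs : ∀ t ∈ Finset.range (k+1+1),
          (RatFunc.X : RatFunc ℚ) ^ (t * (p + 1 + t - (k+1))) * qbinom m t * qbinom (p+1) (k+1 - t)
          = (RatFunc.X : RatFunc ℚ) ^ (t * (p + 1 + t - (k+1))) * qbinom m t *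
              (RatFunc.X ^ (k+1-t) * qbinom p (k+1-t) + (if k+1-t = 0 then 0 else qbinom p (k+1-t-1))) := by
        intro t _
        rw [pascal']
      rw [Finset.sum_congr rfl rhs]
      simp only [mul_add]
      rw [Finset.sum_add_distrib]
      congr 1
      · -- first sums
        rw [Finset.mul_sum]
        apply Finset.sum_congr rfl
        intro t ht
        simp only [Finset.mem_range] at ht
        by_cases hc : k + 1 ≤ p + t
        · have comb : (RatFunc.X : RatFunc ℚ) ^ (t * (p + 1 + t - (k+1))) * qbinom m t *
              (RatFunc.X ^ (k+1-t) * qbinom p (k+1-t)) =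
              RatFunc.X ^ (t * (p + 1 + t - (k+1)) + (k+1-t)) * (qbinom m t * qbinom p (k+1-t)) := by
            rw [pow_add]; ring
          rw [comb]
          have he : t * (p + 1 + t - (k+1)) + (k+1-t) = (k+1) + t * (p + t - (k+1)) := by
            obtain ⟨a, ha⟩ : ∃ a, p + t = k + 1 + a := ⟨p + t - (k+1), by omega⟩
            have h1 : p + 1 + t - (k+1) = a + 1 := by omega
            have h2 : p + t - (k+1) = a := by omega
            rw [h1, h2, Nat.mul_succ]
            omega
          rw [he, pow_add]
          ring
        · rw [qbinom_of_lt (show p < k + 1 - t by omega)]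
          ring
      · -- second sums
        symm
        rw [Finset.sum_range_succ]
        simp only [Nat.sub_self, if_true, mul_zero, add_zero]
        apply Finset.sum_congr rfl
        intro t ht
        simp only [Finset.mem_range] at ht
        rw [if_neg (by omega)]
        have h1 : p + 1 + t - (k+1) = p + t - k := by omega
        have h2 : k + 1 - t - 1 = k - t := by omega
        rw [h1, h2]

lemma qmulti_eq {l i k : ℕ} (h : l ≤ i + k) :
    qmulti l i k = qbinom l i * qbinom i (i + k - l) := by
  by_cases hc : i ≤ l ∧ k ≤ l
  · rw [qmulti, if_pos ⟨hc.1, hc.2, h⟩, qbinom_of_le hc.1, qbinom_of_le (show i + k - l ≤ i by omega)]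
    have h1 : i - (i + k - l) = l - k := by omega
    rw [h1]
    rw [div_mul_div_comm, div_eq_div_iff
      (mul_ne_zero (mul_ne_zero (qfac_ne_zero _) (qfac_ne_zero _)) (qfac_ne_zero _))
      (mul_ne_zero (mul_ne_zero (qfac_ne_zero _) (qfac_ne_zero _))
        (mul_ne_zero (qfac_ne_zero _) (qfac_ne_zero _)))]
    ring
  · rw [qmulti, if_neg (by tauto)]
    by_cases hi : i ≤ l
    · have hk : ¬ k ≤ l := by tauto
      rw [qbinom_of_lt (show i < i + k - l by omega)]
      ring
    · rw [qbinom_of_lt (by omega)]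
      ring

lemma trinomial (n i t : ℕ) (hi : i ≤ n) :
    qbinom n i * qbinom (n - i) t = qbinom n (i + t) * qbinom (i + t) i := by
  by_cases ht : t ≤ n - i
  · rw [qbinom_of_le hi, qbinom_of_le ht, qbinom_of_le (show i + t ≤ n by omega),
      qbinom_of_le (show i ≤ i + t by omega)]
    have h1 : n - i - t = n - (i + t) := by omega
    have h2 : i + t - i = t := by omega
    rw [h1, h2, div_mul_div_comm, div_mul_div_comm]
    rw [div_eq_div_iff
      (mul_ne_zero (mul_ne_zero (qfac_ne_zero _) (qfac_ne_zero _))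
        (mul_ne_zero (qfac_ne_zero _) (qfac_ne_zero _)))
      (mul_ne_zero (mul_ne_zero (qfac_ne_zero _) (qfac_ne_zero _))
        (mul_ne_zero (qfac_ne_zero _) (qfac_ne_zero _)))]
    ring
  · rw [qbinom_of_lt (show n - i < t by omega), qbinom_of_lt (show n < i + t by omega)]
    ring

lemma prod_lemma (i k n : ℕ) :
    qbinom n i * qbinom n k = ∑ l ∈ Finset.range (i + k + 1),
      (RatFunc.X : RatFunc ℚ) ^ ((l - i) * (l - k)) * qmulti l i k * qbinom n l := by
  by_cases hi : i ≤ n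
  · by_cases hk : k ≤ n
    · have hv : qbinom n k = ∑ t ∈ Finset.range (k+1),
          (RatFunc.X : RatFunc ℚ) ^ (t * (i + t - k)) * qbinom (n - i) t * qbinom i (k - t) := by
        conv_lhs => rw [show n = (n - i) + i by omega]
        exact vandermonde (n - i) i k
      rw [hv, Finset.mul_sum]
      conv_rhs => rw [show i + k + 1 = i + (k + 1) from by omega, Finset.sum_range_add]
      have hz : ∑ l ∈ Finset.range i,
          (RatFunc.X : RatFunc ℚ) ^ ((l - i) * (l - k)) * qmulti l i k * qbinom n l = 0 := by
        apply Finset.sum_eq_zero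
        intro l hl
        simp only [Finset.mem_range] at hl
        rw [qmulti, if_neg (by omega)]
        ring
      rw [hz, zero_add]
      apply Finset.sum_congr rfl
      intro t ht
      simp only [Finset.mem_range] at ht
      rw [qmulti_eq (show i + t ≤ i + k by omega)]
      have h1 : i + t - i = t := by omega
      have h2 : i + k - (i + t) = k - t := by omega
      rw [h1, h2]
      have h3 : qbinom n i * (RatFunc.X ^ (t * (i + t - k)) * qbinom (n - i) t * qbinom i (k - t))
          = RatFunc.X ^ (t * (i + t - k)) * (qbinom n i * qbinom (n - i) t) * qbinom i (k - t) := by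
        ring
      rw [h3, trinomial n i t hi]
      ring
    · rw [qbinom_of_lt (show n < k by omega), mul_zero]
      symm
      apply Finset.sum_eq_zero
      intro l hl
      by_cases hln : l ≤ n
      · rw [qmulti, if_neg (by omega)]; ring
      · rw [qbinom_of_lt (by omega)]; ring
  · rw [qbinom_of_lt (show n < i by omega), zero_mul]
    symm
    apply Finset.sum_eq_zero
    intro l hl
    by_cases hln : l ≤ n
    · rw [qmulti, if_neg (by omega)]; ring
    · rw [qbinom_of_lt (by omega)]; ring

noncomputable def Cpoly (j k l : ℕ) : Polynomial ℤ :=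
  if l ≤ j + k then Polynomial.X ^ ((l-j)*(l-k)) * Gpoly l j * Gpoly j (j+k-l) else 0

lemma prod_lemma' (j k n M : ℕ) (hM : j + k + 1 ≤ M) :
    qbinom n j * qbinom n k = ∑ l ∈ Finset.range M,
      Polynomial.aeval (RatFunc.X : RatFunc ℚ) (Cpoly j k l) * qbinom n l := by
  rw [prod_lemma j k n]
  rw [Finset.sum_subset (Finset.range_subset_range.2 hM)
    (fun l _ hl => by
      simp only [Finset.mem_range] at hl
      rw [qmulti, if_neg (by omega)]
      ring)]
  apply Finset.sum_congr rfl
  intro l _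
  by_cases hljk : l ≤ j + k
  · rw [show Cpoly j k l = Polynomial.X ^ ((l-j)*(l-k)) * Gpoly l j * Gpoly j (j+k-l) from
      if_pos hljk]
    rw [qmulti_eq hljk, qbinom_eq_aeval l j, qbinom_eq_aeval j (j+k-l)]
    simp only [map_mul, map_pow, Polynomial.aeval_X]
    ring
  · rw [show Cpoly j k l = 0 from if_neg hljk, qmulti, if_neg (by omega)]
    simp


/-- $q$-analog of Statement 7: the coefficients are polynomials in `q` with
integer coefficients (viewed in `ℚ(q)` by evaluating at `q = RatFunc.X`). -/
theorem stmt_14 (k r : ℕ) (hr : 1 ≤ r) :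
    ∃ P : ℕ → Polynomial ℤ, ∀ n : ℕ,
      (qbinom n k) ^ r =
        ∑ j ∈ Finset.range (r * k + 1),
          Polynomial.aeval (RatFunc.X : RatFunc ℚ) (P j) * qbinom n j := by
  clear hr
  induction r with
  | zero =>
    refine ⟨fun _ => 1, fun n => ?_⟩
    simp [qbinom_zero]
  | succ r ih =>
    obtain ⟨P, hP⟩ := ih
    refine ⟨fun l => ∑ j ∈ Finset.range (r*k+1), P j * Cpoly j k l, fun n => ?_⟩
    rw [pow_succ, hP n, Finset.sum_mul]
    have step : ∀ j ∈ Finset.range (r*k+1),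
        Polynomial.aeval (RatFunc.X : RatFunc ℚ) (P j) * qbinom n j * qbinom n k =
        ∑ l ∈ Finset.range ((r+1)*k+1),
          Polynomial.aeval (RatFunc.X : RatFunc ℚ) (P j) *
            (Polynomial.aeval (RatFunc.X : RatFunc ℚ) (Cpoly j k l) * qbinom n l) := by
      intro j hj
      simp only [Finset.mem_range] at hj
      rw [mul_assoc, prod_lemma' j k n ((r+1)*k+1) (by nlinarith), Finset.mul_sum]
    rw [Finset.sum_congr rfl step, Finset.sum_comm]
    apply Finset.sum_congr rfl
    intro l _
    rw [map_sum, Finset.sum_mul]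
    apply Finset.sum_congr rfl
    intro j _
    rw [map_mul]
    ring
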